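/- Let a : ℕ → ℝ be a sequence with a(0) = 1, a(n) ≥ 0 for all n, and (2n+1)·a(n) ≥ (1/2)·∑_{k=0}^{n−1} a(k)·a(n−1−k) for every n ≥ 1. Let u : ℕ → ℝ be defined by u(0) = 1 and (2n+1)·u(n) = (1/2)·∑_{k=0}^{n−1} u(k)·u(n−1−k) for n ≥ 1. Then a(n) ≥ u(n) for every n ∈ ℕ. -/
import Mathlib


open Finset

/-- If `a` is a nonnegative sequence with `a 0 = 1` satisfying the coefficient
inequality `(2n+1)·a n ≥ (1/2)·∑_{k<n} a k · a (n-1-k)` for `n ≥ 1`, and `u` is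
the sequence defined by the corresponding equality, then `a n ≥ u n` for all `n`. -/
theorem stmt_1 (a u : ℕ → ℝ) (ha0 : a 0 = 1) (hann : ∀ n, 0 ≤ a n)
    (harec : ∀ n : ℕ, 1 ≤ n →
      (2 * (n : ℝ) + 1) * a n ≥ (1 / 2) * ∑ k ∈ Finset.range n, a k * a (n - 1 - k))
    (hu0 : u 0 = 1)
    (hurec : ∀ n : ℕ, 1 ≤ n →
      (2 * (n : ℝ) + 1) * u n = (1 / 2) * ∑ k ∈ Finset.range n, u k * u (n - 1 - k)) :
    ∀ n : ℕ, a n ≥ u n := by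
  have key : ∀ n : ℕ, 0 ≤ u n ∧ u n ≤ a n := by
    intro n
    induction n using Nat.strong_induction_on with
    | _ n ih =>
      rcases Nat.eq_zero_or_pos n with rfl | hn
      · rw [hu0, ha0]; exact ⟨zero_le_one, le_refl 1⟩
      · have hpos : (0 : ℝ) < 2 * (n : ℝ) + 1 := by positivity
        have hsum : ∑ k ∈ Finset.range n, u k * u (n - 1 - k)
            ≤ ∑ k ∈ Finset.range n, a k * a (n - 1 - k) := by
          apply Finset.sum_le_sum
          intro k hk
          have h1 := ih k (Finset.mem_range.mp hk)
          have h2 := ih (n - 1 - k) (by omega)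
          exact mul_le_mul h1.2 h2.2 h2.1 (hann k)
        have hsumnn : (0 : ℝ) ≤ ∑ k ∈ Finset.range n, u k * u (n - 1 - k) := by
          apply Finset.sum_nonneg
          intro k hk
          exact mul_nonneg (ih k (Finset.mem_range.mp hk)).1 (ih (n - 1 - k) (by omega)).1
        have heq := hurec n hn
        have hge := harec n hn
        constructor
        · nlinarith
        · nlinarith
  intro n; exact (key n).2
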